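/- arXiv:math/0201285 — 2 statements merged into one kernel-verified Lean document; each statement's English description precedes it below -/
import Mathlib

section
/- Let (R_i), i = 1,…,n (n ≥ 1), be a profile of total quasi-orders (complete, reflexive, transitive relations) on a set X. Define π(a,b) = p_{ab}/(p_{ab}+p_{ba}) if p_{ab}+p_{ba} > 0 and π(a,b) = 1 otherwise (the convention 0/0 := 1), and set d_P(a,b) = 1 − π(a,b). Then d_P satisfies the triangle inequality: for all x, y, z ∈ X, d_P(x,y) + d_P(y,z) ≥ d_P(x,z). -/
namespace SC

/-- `p_{ab}`: the number of individuals `i` with `a P_i b` (strict preference). -/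
noncomputable def pp {X : Type*} {n : ℕ} (R : Fin n → X → X → Prop) (a b : X) : ℕ :=
  Nat.card {i : Fin n // R i a b ∧ ¬ R i b a}

/-- `π(a,b) = p_{ab}/(p_{ab}+p_{ba})`, with the convention `0/0 := 1`. -/
noncomputable def piP {X : Type*} {n : ℕ} (R : Fin n → X → X → Prop) (a b : X) : ℝ :=
  if pp R a b + pp R b a = 0 then 1
  else (pp R a b : ℝ) / ((pp R a b : ℝ) + (pp R b a : ℝ))

end SC

open SC

/-- `1 - π(a,b)` equals `p_{ba}/(p_{ab}+p_{ba})` unconditionally (with `0/0 = 0` in ℝ). -/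
lemma one_sub_piP {X : Type*} {n : ℕ} (R : Fin n → X → X → Prop) (a b : X) :
    1 - piP R a b = (pp R b a : ℝ) / ((pp R a b : ℝ) + (pp R b a : ℝ)) := by
  unfold piP
  by_cases h : pp R a b + pp R b a = 0
  · rcases Nat.add_eq_zero.mp h with ⟨h1, h2⟩
    simp [h, h1, h2]
  · have h' : ((pp R a b : ℝ) + (pp R b a : ℝ)) ≠ 0 := by
      push_cast [← Nat.cast_add]
      exact_mod_cast h
    rw [if_neg h]
    field_simp
    ring

/-- Combinatorial triangle fact: `p_{zx} ≤ p_{yx} + p_{zy}`. -/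
lemma pp_tri {X : Type*} {n : ℕ} (R : Fin n → X → X → Prop)
    (htotal : ∀ i, ∀ a b : X, R i a b ∨ R i b a)
    (htrans : ∀ i, Transitive (R i)) (x y z : X) :
    pp R z x ≤ pp R y x + pp R z y := by
  have key : {i : Fin n | R i z x ∧ ¬ R i x z} ⊆
      {i : Fin n | R i y x ∧ ¬ R i x y} ∪ {i : Fin n | R i z y ∧ ¬ R i y z} := by
    intro i hi
    by_contra hc
    simp only [Set.mem_union, Set.mem_setOf_eq] at hc
    push_neg at hc
    obtain ⟨h1, h2⟩ := hc
    have hxy : R i x y := by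
      rcases htotal i x y with h | h
      · exact h
      · exact h1 h
    have hyz : R i y z := by
      rcases htotal i y z with h | h
      · exact h
      · exact h2 h
    exact hi.2 (htrans i hxy hyz)
  have e1 : pp R z x = ({i : Fin n | R i z x ∧ ¬ R i x z} : Set (Fin n)).ncard := by
    rw [pp, ← Nat.card_coe_set_eq]; rfl
  have e2 : pp R y x = ({i : Fin n | R i y x ∧ ¬ R i x y} : Set (Fin n)).ncard := by
    rw [pp, ← Nat.card_coe_set_eq]; rfl
  have e3 : pp R z y = ({i : Fin n | R i z y ∧ ¬ R i y z} : Set (Fin n)).ncard := by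
    rw [pp, ← Nat.card_coe_set_eq]; rfl
  rw [e1, e2, e3]
  calc ({i : Fin n | R i z x ∧ ¬ R i x z} : Set (Fin n)).ncard
      ≤ ({i : Fin n | R i y x ∧ ¬ R i x y} ∪ {i : Fin n | R i z y ∧ ¬ R i y z} :
          Set (Fin n)).ncard :=
        Set.ncard_le_ncard key (Set.toFinite _)
    _ ≤ _ := Set.ncard_union_le _ _

/-- Real arithmetic lemma. -/
lemma real_tri {A B C D E F : ℝ} (hA : 0 ≤ A) (hB : 0 ≤ B) (hC : 0 ≤ C) (hD : 0 ≤ D)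
    (hE : 0 ≤ E) (hF : 0 ≤ F) (h1 : E ≤ A + C) (h2 : B ≤ F + C) (h3 : D ≤ A + F) :
    E / (E + F) ≤ A / (A + B) + C / (C + D) := by
  by_cases hEF : E + F = 0
  · have hE0 : E = 0 := le_antisymm (by linarith) hE
    have hF0 : F = 0 := by linarith
    rw [hE0, hF0]
    simp
    positivity
  · have hEFpos : 0 < E + F := lt_of_le_of_ne (by positivity) (Ne.symm hEF)
    have hS : 0 < A + C + F := by
      by_contra h
      push_neg at h
      have hA0 : A = 0 := by linarith
      have hC0 : C = 0 := by linarith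
      have hF0 : F = 0 := by linarith
      have hE0 : E = 0 := le_antisymm (by linarith) hE
      exact hEF (by rw [hE0, hF0]; ring)
    have step1 : A / (A + C + F) ≤ A / (A + B) := by
      rcases eq_or_lt_of_le hA with h | h
      · simp [← h]
      · apply div_le_div_of_nonneg_left hA (by linarith) (by linarith)
    have step2 : C / (A + C + F) ≤ C / (C + D) := by
      rcases eq_or_lt_of_le hC with h | h
      · simp [← h]
      · apply div_le_div_of_nonneg_left hC (by linarith) (by linarith)
    have step3 : E / (E + F) ≤ (A + C) / (A + C + F) := by
      rw [div_le_div_iff₀ hEFpos hS]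
      nlinarith
    calc E / (E + F) ≤ (A + C) / (A + C + F) := step3
      _ = A / (A + C + F) + C / (A + C + F) := by ring
      _ ≤ A / (A + B) + C / (C + D) := add_le_add step1 step2

open SC in
/-- for a profile of total quasi-orders, `d_P(a,b) = 1 − π(a,b)` satisfies
the triangle inequality. -/
theorem stmt18 {X : Type*} {n : ℕ} (hn : 1 ≤ n)
    (R : Fin n → X → X → Prop)
    (hrefl : ∀ i, Reflexive (R i))
    (htotal : ∀ i, ∀ a b : X, R i a b ∨ R i b a)
    (htrans : ∀ i, Transitive (R i)) :
    ∀ x y z : X, (1 - piP R x y) + (1 - piP R y z) ≥ 1 - piP R x z := by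
  intro x y z
  rw [one_sub_piP, one_sub_piP, one_sub_piP]
  have h1 : pp R z x ≤ pp R y x + pp R z y := pp_tri R htotal htrans x y z
  have h2 : pp R x y ≤ pp R x z + pp R z y := by
    have := pp_tri R htotal htrans y z x; omega
  have h3 : pp R y z ≤ pp R y x + pp R x z := by
    have := pp_tri R htotal htrans z x y; omega
  have := real_tri (A := (pp R y x : ℝ)) (B := (pp R x y : ℝ)) (C := (pp R z y : ℝ))
    (D := (pp R y z : ℝ)) (E := (pp R z x : ℝ)) (F := (pp R x z : ℝ))
    (by positivity) (by positivity) (by positivity) (by positivity) (by positivity)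
    (by positivity) (by exact_mod_cast h1) (by exact_mod_cast h2) (by exact_mod_cast h3)
  rw [add_comm ((pp R x y : ℝ)) ((pp R y x : ℝ)), add_comm ((pp R y z : ℝ)) ((pp R z y : ℝ)),
    add_comm ((pp R x z : ℝ)) ((pp R z x : ℝ))]
  exact this
end

section
/- Let (R_i), i = 1,…,n (n ≥ 1), be a profile of total quasi-orders (complete, reflexive, transitive relations) on a set X. Then for all a, b ∈ X one has r_{ab} + r_{ba} ≥ n > 0, and the function d_R(a,b) = 1 − r_{ab}/(r_{ab}+r_{ba}) satisfies the triangle inequality: for all x, y, z ∈ X, d_R(x,y) + d_R(y,z) ≥ d_R(x,z). -/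
namespace SC

/-- `r_{ab}`: the number of individuals `i` with `a R_i b`. -/
noncomputable def rr {X : Type*} {n : ℕ} (R : Fin n → X → X → Prop) (a b : X) : ℕ :=
  Nat.card {i : Fin n // R i a b}

/-- `d_R(a,b) = 1 − r_{ab}/(r_{ab}+r_{ba})`. -/
noncomputable def dR {X : Type*} {n : ℕ} (R : Fin n → X → X → Prop) (a b : X) : ℝ :=
  1 - (rr R a b : ℝ) / ((rr R a b : ℝ) + (rr R b a : ℝ))

end SC

private lemma real_key (nn b1 b2 b3 t1 t2 t3 tt c : ℝ)
    (hn : 0 < nn) (hb1 : 0 ≤ b1) (hb2 : 0 ≤ b2) (hb3 : 0 ≤ b3)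
    (htt : 0 ≤ tt) (hc : 0 ≤ c) (ht3 : 0 ≤ t3)
    (h1 : b1 + t1 ≤ nn) (h2 : b2 + t2 ≤ nn) (h3 : b3 ≤ nn)
    (htt1 : tt ≤ t1) (htt2 : tt ≤ t2)
    (ht3c : t3 ≤ tt + c) (hb3c : b3 + c ≤ b1 + b2) :
    (b3 + t3) / (nn + t3) ≤ (b1 + t1) / (nn + t1) + (b2 + t2) / (nn + t2) := by
  have p1 : 0 < nn + t1 := by linarith
  have p2 : 0 < nn + t2 := by linarith
  have p3 : 0 < nn + t3 := by linarith
  have ptt : 0 < nn + tt := by linarith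
  have pttc : 0 < nn + (tt + c) := by linarith
  have sA : (b1 + tt) / (nn + tt) ≤ (b1 + t1) / (nn + t1) := by
    rw [div_le_div_iff₀ ptt p1]
    nlinarith [mul_nonneg (by linarith : (0:ℝ) ≤ t1 - tt) (by linarith : (0:ℝ) ≤ nn - b1)]
  have sB : (b2 + tt) / (nn + tt) ≤ (b2 + t2) / (nn + t2) := by
    rw [div_le_div_iff₀ ptt p2]
    nlinarith [mul_nonneg (by linarith : (0:ℝ) ≤ t2 - tt) (by linarith : (0:ℝ) ≤ nn - b2)]
  have sC : (b3 + t3) / (nn + t3) ≤ (b3 + (tt + c)) / (nn + (tt + c)) := by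
    rw [div_le_div_iff₀ p3 pttc]
    nlinarith [mul_nonneg (by linarith : (0:ℝ) ≤ tt + c - t3) (by linarith : (0:ℝ) ≤ nn - b3)]
  have sD : (b3 + (tt + c)) / (nn + (tt + c)) ≤ (b1 + b2 + tt) / (nn + tt) :=
    div_le_div₀ (by linarith) (by linarith) ptt (by linarith)
  have sE : (b1 + b2 + tt) / (nn + tt) ≤ (b1 + tt) / (nn + tt) + (b2 + tt) / (nn + tt) := by
    rw [← add_div, div_le_div_iff₀ ptt ptt]
    nlinarith
  linarith

open SC in
private lemma rr_eq' {X : Type*} {n : ℕ} (R : Fin n → X → X → Prop) (a b : X)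
    [DecidablePred fun i => R i a b] :
    rr R a b = (Finset.univ.filter fun i => R i a b).card := by
  simp [rr, Nat.card_eq_fintype_card, Fintype.card_subtype]

open SC in
/-- for a profile of total quasi-orders, `r_{ab} + r_{ba} ≥ n > 0` for all
`a, b`, and `d_R(a,b) = 1 − r_{ab}/(r_{ab}+r_{ba})` satisfies the triangle inequality. -/
theorem stmt19 {X : Type*} {n : ℕ} (hn : 1 ≤ n)
    (R : Fin n → X → X → Prop)
    (hrefl : ∀ i, Reflexive (R i))
    (htotal : ∀ i, ∀ a b : X, R i a b ∨ R i b a)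
    (htrans : ∀ i, Transitive (R i)) :
    (∀ a b : X, n ≤ rr R a b + rr R b a) ∧ 0 < n ∧
    (∀ x y z : X, dR R x y + dR R y z ≥ dR R x z) := by
  classical
  -- basic counting setup
  set tset : X → X → Finset (Fin n) :=
    fun a b => Finset.univ.filter (fun i => R i a b ∧ R i b a) with htsetdef
  set sset : X → X → Finset (Fin n) :=
    fun a b => Finset.univ.filter (fun i => R i a b ∧ ¬ R i b a) with hssetdef
  have hts : ∀ a b, tset a b = tset b a := by
    intro a b; ext i; simp [htsetdef, and_comm]
  have hr : ∀ a b, rr R a b = (sset a b).card + (tset a b).card := by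
    intro a b
    rw [rr_eq']
    have h := Finset.card_filter_add_card_filter_not
      (s := Finset.univ.filter fun i => R i a b) (p := fun i => R i b a)
    simp only [Finset.filter_filter] at h
    simp only [htsetdef, hssetdef]
    omega
  have hsum : ∀ a b, rr R a b + rr R b a = n + (tset a b).card := by
    intro a b
    rw [rr_eq', rr_eq']
    have hu : (Finset.univ.filter fun i => R i a b) ∪ (Finset.univ.filter fun i => R i b a)
        = Finset.univ := by
      ext i
      simp only [Finset.mem_union, Finset.mem_filter, Finset.mem_univ, true_and, iff_true]
      exact htotal i a b
    have hi : (Finset.univ.filter fun i => R i a b) ∩ (Finset.univ.filter fun i => R i b a)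
        = tset a b := by
      rw [htsetdef, ← Finset.filter_and]
    have := Finset.card_union_add_card_inter
      (Finset.univ.filter fun i => R i a b) (Finset.univ.filter fun i => R i b a)
    rw [hu, hi] at this
    simpa using this.symm
  have hrle : ∀ a b, rr R a b ≤ n := by
    intro a b
    rw [rr_eq']
    simpa using Finset.card_filter_le Finset.univ (fun i => R i a b)
  refine ⟨?_, hn, ?_⟩
  · intro a b
    have := hsum a b
    omega
  · intro x y z
    -- formula for dR
    have hd : ∀ a b : X, dR R a b =
        (((sset b a).card : ℝ) + (tset a b).card) / ((n : ℝ) + (tset a b).card) := by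
      intro a b
      have hpos : (0:ℝ) < (n : ℝ) + (tset a b).card := by
        have : (1:ℝ) ≤ (n:ℝ) := by exact_mod_cast hn
        positivity
      have hD : ((rr R a b : ℝ) + (rr R b a : ℝ)) = (n : ℝ) + (tset a b).card := by
        exact_mod_cast hsum a b
      have hB : (rr R b a : ℝ) = ((sset b a).card : ℝ) + (tset a b).card := by
        rw [hts a b] at *
        exact_mod_cast hr b a
      rw [dR, hD, eq_div_iff (ne_of_gt hpos), sub_mul, div_mul_cancel₀ _ (ne_of_gt hpos)]
      linarith [hD, hB]
    rw [ge_iff_le, hd x y, hd y z, hd x z]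
    -- combinatorial sets
    set A : Finset (Fin n) :=
      Finset.univ.filter (fun i => (R i x z ∧ R i z x) ∧ (R i y x ∧ ¬ R i x y)) with hAdef
    set B : Finset (Fin n) :=
      Finset.univ.filter (fun i =>
        (R i x z ∧ R i z x) ∧ ¬ (R i y x ∧ ¬ R i x y) ∧ (R i z y ∧ ¬ R i y z)) with hBdef
    set TT : Finset (Fin n) :=
      Finset.univ.filter (fun i => (R i x y ∧ R i y x) ∧ (R i y z ∧ R i z y)) with hTTdef
    -- fact 1 : b3 + |A| + |B| ≤ b1 + b2
    have f1 : (sset z x).card + A.card + B.card ≤ (sset y x).card + (sset z y).card := by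
      have hd1 : Disjoint (sset z x) A := by
        rw [Finset.disjoint_left]
        intro i hi hiA
        simp only [hssetdef, hAdef, Finset.mem_filter, Finset.mem_univ, true_and] at hi hiA
        exact hi.2 hiA.1.1
      have hd2 : Disjoint (sset z x) B := by
        rw [Finset.disjoint_left]
        intro i hi hiB
        simp only [hssetdef, hBdef, Finset.mem_filter, Finset.mem_univ, true_and] at hi hiB
        exact hi.2 hiB.1.1
      have hd3 : Disjoint A B := by
        rw [Finset.disjoint_left]
        intro i hiA hiB
        simp only [hAdef, hBdef, Finset.mem_filter, Finset.mem_univ, true_and] at hiA hiB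
        exact hiB.2.1 hiA.2
      have hsub : (sset z x) ∪ A ∪ B ⊆ (sset y x) ∪ (sset z y) := by
        intro i hi
        simp only [Finset.mem_union] at hi
        simp only [hssetdef, hAdef, hBdef, Finset.mem_union, Finset.mem_filter,
          Finset.mem_univ, true_and] at hi ⊢
        rcases hi with (hi | hi) | hi
        · by_cases hxy : R i x y
          · by_cases hyz : R i y z
            · exact absurd (htrans i hxy hyz) hi.2
            · refine Or.inr ⟨(htotal i y z).resolve_left hyz, hyz⟩
          · exact Or.inl ⟨(htotal i x y).resolve_left hxy, hxy⟩
        · exact Or.inl hi.2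
        · exact Or.inr hi.2.2
      calc (sset z x).card + A.card + B.card = ((sset z x) ∪ A ∪ B).card := by
            rw [Finset.card_union_of_disjoint (by
              rw [Finset.disjoint_union_left]; exact ⟨hd2, hd3⟩),
              Finset.card_union_of_disjoint hd1]
        _ ≤ ((sset y x) ∪ (sset z y)).card := Finset.card_le_card hsub
        _ ≤ _ := Finset.card_union_le _ _
    -- fact 2 : t3 ≤ |TT| + |A| + |B|
    have f2 : (tset x z).card ≤ TT.card + A.card + B.card := by
      have hsub : tset x z ⊆ TT ∪ A ∪ B := by
        intro i hi
        simp only [htsetdef, Finset.mem_filter, Finset.mem_univ, true_and] at hi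
        simp only [hTTdef, hAdef, hBdef, Finset.mem_union, Finset.mem_filter,
          Finset.mem_univ, true_and]
        by_cases h1 : R i y x ∧ ¬ R i x y
        · exact Or.inl (Or.inr ⟨hi, h1⟩)
        · by_cases h2 : R i z y ∧ ¬ R i y z
          · exact Or.inr ⟨hi, h1, h2⟩
          · -- derive the triple tie
            have hxy : R i x y := by
              by_cases hyx : R i y x
              · by_contra hxy; exact h1 ⟨hyx, hxy⟩
              · exact (htotal i x y).resolve_right hyx
            have hyz : R i y z := by
              by_cases hzy : R i z y
              · by_contra hyz; exact h2 ⟨hzy, hyz⟩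
              · exact (htotal i y z).resolve_right hzy
            exact Or.inl (Or.inl ⟨⟨hxy, htrans i hyz hi.2⟩, ⟨hyz, htrans i hi.2 hxy⟩⟩)
      calc (tset x z).card ≤ (TT ∪ A ∪ B).card := Finset.card_le_card hsub
        _ ≤ (TT ∪ A).card + B.card := Finset.card_union_le _ _
        _ ≤ TT.card + A.card + B.card := by
            have := Finset.card_union_le TT A; omega
    -- fact 3 : TT ⊆ both tie sets
    have f3a : TT.card ≤ (tset x y).card := by
      apply Finset.card_le_card
      intro i hi
      simp only [hTTdef, htsetdef, Finset.mem_filter, Finset.mem_univ, true_and] at hi ⊢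
      exact hi.1
    have f3b : TT.card ≤ (tset y z).card := by
      apply Finset.card_le_card
      intro i hi
      simp only [hTTdef, htsetdef, Finset.mem_filter, Finset.mem_univ, true_and] at hi ⊢
      exact hi.2
    -- fact 4 : b_j + t_j ≤ n
    have f4a : (sset y x).card + (tset x y).card ≤ n := by
      rw [hts x y, ← hr y x]; exact hrle y x
    have f4b : (sset z y).card + (tset y z).card ≤ n := by
      rw [hts y z, ← hr z y]; exact hrle z y
    have f4c : (sset z x).card ≤ n := by
      have := hr z x; have := hrle z x; omega
    -- apply the real lemma
    have hnpos : (0:ℝ) < (n:ℝ) := by exact_mod_cast Nat.lt_of_lt_of_le Nat.zero_lt_one hn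
    have f1' : (sset z x).card + (A.card + B.card) ≤ (sset y x).card + (sset z y).card := by
      omega
    have f2' : (tset x z).card ≤ TT.card + (A.card + B.card) := by omega
    exact real_key (n:ℝ) ((sset y x).card) ((sset z y).card) ((sset z x).card)
      ((tset x y).card) ((tset y z).card) ((tset x z).card) (TT.card)
      ((A.card : ℝ) + B.card)
      hnpos (by positivity) (by positivity) (by positivity)
      (by positivity) (by positivity) (by positivity)
      (by exact_mod_cast f4a) (by exact_mod_cast f4b) (by exact_mod_cast f4c)
      (by exact_mod_cast f3a) (by exact_mod_cast f3b)
      (by exact_mod_cast f2') (by exact_mod_cast f1')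
end
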